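/- arXiv:1709.04530 — 2 statements merged into one kernel-verified Lean document; each statement's English description precedes it below -/
import Mathlib

section
/- (Positivity of the innovation covariance in unstable directions.) Let A, C, Q, R, P̄ be real matrices with Q positive definite, R positive definite, and P̄ symmetric positive semidefinite satisfying the discrete algebraic Riccati equation P̄ = A P̄ Aᵀ + Q − A P̄ Cᵀ (C P̄ Cᵀ + R)^{−1} C P̄ Aᵀ. Let K = P̄ Cᵀ (C P̄ Cᵀ + R)^{−1} and Q̄ = K (C P̄ Cᵀ + R) Kᵀ. If v ∈ ℂⁿ is a nonzero left eigenvector of A with eigenvalue λ ∈ ℂ (i.e., v* A = λ v*, identifying A with its complexification) and |λ| ≥ 1, then v* Q̄ v > 0 (this quantity is real since Q̄ is real symmetric). -/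
open MeasureTheory ProbabilityTheory Matrix Filter Set

noncomputable section

private lemma quad_real {n : ℕ} {M : Matrix (Fin n) (Fin n) ℝ} (hM : M.IsHermitian)
    (v : Fin n → ℂ) :
    star v ⬝ᵥ (M.map (algebraMap ℝ ℂ)) *ᵥ v =
      (((fun i => (v i).re) ⬝ᵥ M *ᵥ (fun i => (v i).re)
        + (fun i => (v i).im) ⬝ᵥ M *ᵥ (fun i => (v i).im) : ℝ) : ℂ) := by
  have hsym : ∀ i j, M j i = M i j := fun i j => hM.apply i j
  apply Complex.ext
  · simp only [dotProduct, mulVec, Matrix.map_apply, Finset.mul_sum, Complex.re_sum,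
      Complex.mul_re, Complex.mul_im, Pi.star_apply, Complex.star_def, Complex.conj_re,
      Complex.conj_im, Complex.ofReal_re, Complex.ofReal_im, Complex.add_re,
      Complex.ofReal_sum, Complex.coe_algebraMap]
    rw [← Finset.sum_add_distrib]
    refine Finset.sum_congr rfl fun i _ => ?_
    rw [← Finset.sum_add_distrib]
    refine Finset.sum_congr rfl fun j _ => by ring
  · simp only [dotProduct, mulVec, Matrix.map_apply, Finset.mul_sum, Complex.im_sum,
      Complex.mul_re, Complex.mul_im, Pi.star_apply, Complex.star_def, Complex.conj_re,
      Complex.conj_im, Complex.ofReal_re, Complex.ofReal_im, Complex.add_im,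
      Complex.coe_algebraMap]
    have h : ∑ i : Fin n, ∑ j : Fin n, M i j * (v i).im * (v j).re
        = ∑ i : Fin n, ∑ j : Fin n, M i j * (v i).re * (v j).im := by
      rw [Finset.sum_comm]
      exact Finset.sum_congr rfl fun i _ => Finset.sum_congr rfl fun j _ => by
        rw [hsym j i]; ring
    calc ∑ i : Fin n, ∑ j : Fin n,
          ((v i).re * (M i j * (v j).im + 0 * (v j).re) + -(v i).im * (M i j * (v j).re - 0 * (v j).im))
        = (∑ i : Fin n, ∑ j : Fin n, M i j * (v i).re * (v j).im)
          - ∑ i : Fin n, ∑ j : Fin n, M i j * (v i).im * (v j).re := by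
          rw [← Finset.sum_sub_distrib]
          refine Finset.sum_congr rfl fun i _ => ?_
          rw [← Finset.sum_sub_distrib]
          exact Finset.sum_congr rfl fun j _ => by ring
      _ = 0 := by rw [h]; ring

private lemma left_eig_transpose {n : ℕ} (A : Matrix (Fin n) (Fin n) ℝ) (v : Fin n → ℂ) (l : ℂ)
    (heig : Matrix.vecMul (star v) (A.map (algebraMap ℝ ℂ)) = l • star v) :
    (A.map (algebraMap ℝ ℂ))ᵀ *ᵥ v = (starRingEnd ℂ l) • v := by
  have h : vecMul v (A.map (algebraMap ℝ ℂ)) = star (vecMul (star v) (A.map (algebraMap ℝ ℂ))) := by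
    ext i
    simp only [vecMul, dotProduct, Pi.star_apply, Matrix.map_apply, Complex.star_def,
      map_sum, _root_.map_mul, Complex.coe_algebraMap, Complex.conj_conj, Complex.conj_ofReal]
  rw [Matrix.mulVec_transpose, h, heig, star_smul]
  ext i; simp [Complex.star_def]

private lemma quad_conj {n : ℕ} (A M : Matrix (Fin n) (Fin n) ℝ) (v : Fin n → ℂ) (l : ℂ)
    (heig : Matrix.vecMul (star v) (A.map (algebraMap ℝ ℂ)) = l • star v) :
    star v ⬝ᵥ ((A * M * Aᵀ).map (algebraMap ℝ ℂ)) *ᵥ v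
      = (l * starRingEnd ℂ l) * (star v ⬝ᵥ (M.map (algebraMap ℝ ℂ)) *ᵥ v) := by
  have h1 := left_eig_transpose A v l heig
  have hmap : (A * M * Aᵀ).map (algebraMap ℝ ℂ)
      = A.map (algebraMap ℝ ℂ) * M.map (algebraMap ℝ ℂ) * (A.map (algebraMap ℝ ℂ))ᵀ := by
    rw [Matrix.map_mul, Matrix.map_mul, Matrix.transpose_map]
  rw [hmap, ← Matrix.mulVec_mulVec, ← Matrix.mulVec_mulVec, Matrix.dotProduct_mulVec, heig, h1,
    Matrix.mulVec_smul]
  simp [smul_dotProduct, dotProduct_smul, smul_smul]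
  ring

/-- **Positivity of the innovation covariance in unstable directions.** Let `P̄ ⪰ 0`
satisfy the discrete algebraic Riccati equation with `Q ≻ 0` and `R ≻ 0`, let
`K = P̄ Cᵀ (C P̄ Cᵀ + R)⁻¹` and `Q̄ = K (C P̄ Cᵀ + R) Kᵀ`. If `v ≠ 0` is a left
eigenvector of (the complexification of) `A` with eigenvalue `λ`, `|λ| ≥ 1`, then
`v* Q̄ v > 0` (a real number, since `Q̄` is real symmetric). -/
theorem innovation_covariance_pos_in_unstable_directions
    {n p : ℕ} (A : Matrix (Fin n) (Fin n) ℝ) (C : Matrix (Fin p) (Fin n) ℝ)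
    (Q : Matrix (Fin n) (Fin n) ℝ) (R : Matrix (Fin p) (Fin p) ℝ)
    (Pbar : Matrix (Fin n) (Fin n) ℝ)
    (hQ : Q.PosDef) (hR : R.PosDef) (hPbar : Pbar.PosSemidef)
    (hDARE : Pbar =
      A * Pbar * Aᵀ + Q - A * Pbar * Cᵀ * (C * Pbar * Cᵀ + R)⁻¹ * C * Pbar * Aᵀ)
    (v : Fin n → ℂ) (hv : v ≠ 0) (l : ℂ) (hl : 1 ≤ ‖l‖)
    (heig : Matrix.vecMul (star v) (A.map (algebraMap ℝ ℂ)) = l • star v) :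
    0 < (star v ⬝ᵥ
          (((Pbar * Cᵀ * (C * Pbar * Cᵀ + R)⁻¹) * (C * Pbar * Cᵀ + R) *
            (Pbar * Cᵀ * (C * Pbar * Cᵀ + R)⁻¹)ᵀ).map (algebraMap ℝ ℂ)).mulVec v).re ∧
    (star v ⬝ᵥ
          (((Pbar * Cᵀ * (C * Pbar * Cᵀ + R)⁻¹) * (C * Pbar * Cᵀ + R) *
            (Pbar * Cᵀ * (C * Pbar * Cᵀ + R)⁻¹)ᵀ).map (algebraMap ℝ ℂ)).mulVec v).im
      = 0 := by
  -- matrix algebra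
  have hCP : (C * Pbar * Cᵀ).PosSemidef := by
    have := hPbar.mul_mul_conjTranspose_same C
    simpa [Matrix.conjTranspose_eq_transpose_of_trivial] using this
  have hS : (C * Pbar * Cᵀ + R).PosDef := Matrix.PosDef.posSemidef_add hCP hR
  have hSunit : IsUnit (C * Pbar * Cᵀ + R).det := hS.det_pos.ne'.isUnit
  have hSsym : (C * Pbar * Cᵀ + R)ᵀ = C * Pbar * Cᵀ + R := by
    have h := hS.isHermitian
    rwa [Matrix.IsHermitian, Matrix.conjTranspose_eq_transpose_of_trivial] at h
  have hPsym : Pbarᵀ = Pbar := by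
    have h := hPbar.isHermitian
    rwa [Matrix.IsHermitian, Matrix.conjTranspose_eq_transpose_of_trivial] at h
  set Qb : Matrix (Fin n) (Fin n) ℝ :=
    (Pbar * Cᵀ * (C * Pbar * Cᵀ + R)⁻¹) * (C * Pbar * Cᵀ + R) *
      (Pbar * Cᵀ * (C * Pbar * Cᵀ + R)⁻¹)ᵀ with hQbdef
  have hKT : (Pbar * Cᵀ * (C * Pbar * Cᵀ + R)⁻¹)ᵀ = (C * Pbar * Cᵀ + R)⁻¹ * C * Pbar := by
    rw [Matrix.transpose_mul, Matrix.transpose_mul, Matrix.transpose_nonsing_inv, hSsym,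
      Matrix.transpose_transpose, hPsym, Matrix.mul_assoc]
    simp [Matrix.mul_assoc]
  have key : Qb = Pbar * Cᵀ * (C * Pbar * Cᵀ + R)⁻¹ * C * Pbar := by
    rw [hQbdef, hKT]
    generalize hG : C * Pbar * Cᵀ + R = S at hSunit ⊢
    simp [Matrix.mul_assoc, Matrix.nonsing_inv_mul_cancel_left _ _ hSunit]
  have hQbpsd : Qb.PosSemidef := by
    have := hS.posSemidef.mul_mul_conjTranspose_same (Pbar * Cᵀ * (C * Pbar * Cᵀ + R)⁻¹)
    rwa [Matrix.conjTranspose_eq_transpose_of_trivial] at this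
  have dare2 : Pbar = A * Pbar * Aᵀ + Q - A * Qb * Aᵀ := by
    rw [key]
    conv_lhs => rw [hDARE]
    simp [Matrix.mul_assoc]
  -- quadratic forms as reals
  set x : Fin n → ℝ := fun i => (v i).re with hxdef
  set y : Fin n → ℝ := fun i => (v i).im with hydef
  set pr : ℝ := x ⬝ᵥ Pbar *ᵥ x + y ⬝ᵥ Pbar *ᵥ y with hprdef
  set qr : ℝ := x ⬝ᵥ Q *ᵥ x + y ⬝ᵥ Q *ᵥ y with hqrdef
  set br : ℝ := x ⬝ᵥ Qb *ᵥ x + y ⬝ᵥ Qb *ᵥ y with hbrdef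
  have hEP : star v ⬝ᵥ (Pbar.map (algebraMap ℝ ℂ)) *ᵥ v = (pr : ℂ) :=
    quad_real hPbar.isHermitian v
  have hEQ : star v ⬝ᵥ (Q.map (algebraMap ℝ ℂ)) *ᵥ v = (qr : ℂ) :=
    quad_real hQ.isHermitian v
  have hEB : star v ⬝ᵥ (Qb.map (algebraMap ℝ ℂ)) *ᵥ v = (br : ℂ) :=
    quad_real hQbpsd.isHermitian v
  -- the complex identity from the DARE
  have hmaps : (A * Pbar * Aᵀ + Q - A * Qb * Aᵀ).map (algebraMap ℝ ℂ)
      = ((A * Pbar * Aᵀ).map (algebraMap ℝ ℂ)) + (Q.map (algebraMap ℝ ℂ))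
        - ((A * Qb * Aᵀ).map (algebraMap ℝ ℂ)) := by
    ext i j; simp [Matrix.map_apply, Matrix.sub_apply, Matrix.add_apply]
  have hcx : (pr : ℂ) = (l * starRingEnd ℂ l) * pr + qr - (l * starRingEnd ℂ l) * br := by
    calc (pr : ℂ) = star v ⬝ᵥ (Pbar.map (algebraMap ℝ ℂ)) *ᵥ v := hEP.symm
      _ = star v ⬝ᵥ ((A * Pbar * Aᵀ + Q - A * Qb * Aᵀ).map (algebraMap ℝ ℂ)) *ᵥ v := by
          conv_lhs => rw [dare2]
      _ = star v ⬝ᵥ ((A * Pbar * Aᵀ).map (algebraMap ℝ ℂ)) *ᵥ v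
          + star v ⬝ᵥ (Q.map (algebraMap ℝ ℂ)) *ᵥ v
          - star v ⬝ᵥ ((A * Qb * Aᵀ).map (algebraMap ℝ ℂ)) *ᵥ v := by
          rw [hmaps, Matrix.sub_mulVec, Matrix.add_mulVec, dotProduct_sub, dotProduct_add]
      _ = (l * starRingEnd ℂ l) * pr + qr - (l * starRingEnd ℂ l) * br := by
          rw [quad_conj A Pbar v l heig, quad_conj A Qb v l heig, hEP, hEQ, hEB]
  -- convert to a real identity
  have hlc : l * starRingEnd ℂ l = ((Complex.normSq l : ℝ) : ℂ) := Complex.mul_conj l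
  set c : ℝ := Complex.normSq l with hcdef
  have hre : pr = c * pr + qr - c * br := by
    have := hcx
    rw [hlc] at this
    exact_mod_cast this
  have hc1 : 1 ≤ c := by
    rw [hcdef, ← Complex.sq_norm]
    nlinarith
  -- sign facts
  have hxy : x ≠ 0 ∨ y ≠ 0 := by
    by_contra h
    push_neg at h
    apply hv
    ext i
    have hx0 : x i = 0 := by rw [h.1]; rfl
    have hy0 : y i = 0 := by rw [h.2]; rfl
    exact Complex.ext hx0 hy0
  have hqpos : 0 < qr := by
    rcases hxy with hx | hy
    · have h1 : 0 < x ⬝ᵥ Q *ᵥ x := by simpa using hQ.dotProduct_mulVec_pos hx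
      have h2 : 0 ≤ y ⬝ᵥ Q *ᵥ y := by simpa using hQ.posSemidef.dotProduct_mulVec_nonneg y
      linarith
    · have h1 : 0 ≤ x ⬝ᵥ Q *ᵥ x := by simpa using hQ.posSemidef.dotProduct_mulVec_nonneg x
      have h2 : 0 < y ⬝ᵥ Q *ᵥ y := by simpa using hQ.dotProduct_mulVec_pos hy
      linarith
  have hppos : 0 ≤ pr := by
    have h1 : 0 ≤ x ⬝ᵥ Pbar *ᵥ x := by simpa using hPbar.dotProduct_mulVec_nonneg x
    have h2 : 0 ≤ y ⬝ᵥ Pbar *ᵥ y := by simpa using hPbar.dotProduct_mulVec_nonneg y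
    linarith
  have hbpos : 0 < br := by
    have hcp : 0 ≤ (c - 1) * pr := mul_nonneg (by linarith) hppos
    nlinarith
  refine ⟨?_, ?_⟩
  · rw [show (Qb.map (algebraMap ℝ ℂ)).mulVec v = (Qb.map (algebraMap ℝ ℂ)) *ᵥ v from rfl, hEB]
    simpa using hbpos
  · rw [show (Qb.map (algebraMap ℝ ℂ)).mulVec v = (Qb.map (algebraMap ℝ ℂ)) *ᵥ v from rfl, hEB]
    simp
end
end

section
/- Let A ∈ ℝ^{n×n}, let λ ∈ ℂ and let v ∈ ℂⁿ be nonzero with v* A = λ v* (v is a left eigenvector of the complexification of A), and let P₀ ∈ ℝ^{n×n} be symmetric with P₀ ⪰ q·I for some q > 0. Then for every k ≥ 0: Tr(A^k P₀ (Aᵀ)^k) ≥ q · |λ|^{2k}. -/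
open MeasureTheory ProbabilityTheory Matrix Filter Set

noncomputable section

lemma cs_aux {n : ℕ} (D : Matrix (Fin n) (Fin n) ℂ) (v : Fin n → ℂ) :
    ∑ i, Complex.normSq ((D *ᵥ v) i) ≤
      (∑ i, ∑ j, Complex.normSq (D i j)) * ∑ j, Complex.normSq (v j) := by
  rw [Finset.sum_mul]
  apply Finset.sum_le_sum
  intro i _
  calc Complex.normSq ((D *ᵥ v) i) = (‖∑ j, D i j * v j‖) ^ 2 := by
        rw [Complex.sq_norm]; rfl
    _ ≤ (∑ j, ‖D i j‖ * ‖v j‖) ^ 2 := by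
        apply pow_le_pow_left₀ (norm_nonneg _)
        simpa using norm_sum_le Finset.univ (fun j => D i j * v j)
    _ ≤ (∑ j, ‖D i j‖ ^ 2) * ∑ j, ‖v j‖ ^ 2 :=
        Finset.sum_mul_sq_le_sq_mul_sq _ _ _
    _ = (∑ j, Complex.normSq (D i j)) * ∑ j, Complex.normSq (v j) := by
        simp [Complex.sq_norm]

lemma sdp_aux {n : ℕ} (w : Fin n → ℂ) :
    star w ⬝ᵥ w = ((∑ i, Complex.normSq (w i) : ℝ) : ℂ) := by
  simp [dotProduct, Complex.normSq_eq_conj_mul_self]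

lemma map_conjT {n : ℕ} (M : Matrix (Fin n) (Fin n) ℝ) :
    (M.map (algebraMap ℝ ℂ))ᴴ = Mᵀ.map (algebraMap ℝ ℂ) := by
  have h : Function.Semiconj (algebraMap ℝ ℂ) star star := by
    intro x; simp [Complex.conj_ofReal]
  rw [← Matrix.conjTranspose_map _ h, Matrix.conjTranspose_eq_transpose_of_trivial]

lemma map_pow' {n : ℕ} (M : Matrix (Fin n) (Fin n) ℝ) (k : ℕ) :
    (M ^ k).map (algebraMap ℝ ℂ) = (M.map (algebraMap ℝ ℂ)) ^ k := by
  simpa only [RingHom.mapMatrix_apply] using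
    map_pow (algebraMap ℝ ℂ).mapMatrix M k

lemma map_mul'' {n : ℕ} (M N : Matrix (Fin n) (Fin n) ℝ) :
    (M * N).map (algebraMap ℝ ℂ) = M.map (algebraMap ℝ ℂ) * N.map (algebraMap ℝ ℂ) := by
  simpa only [RingHom.mapMatrix_apply] using
    map_mul (algebraMap ℝ ℂ).mapMatrix M N

lemma mapT_pow {n : ℕ} (A : Matrix (Fin n) (Fin n) ℝ) (k : ℕ) :
    ((Aᵀ) ^ k).map (algebraMap ℝ ℂ) = ((A.map (algebraMap ℝ ℂ)) ^ k)ᴴ := by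
  rw [← map_pow', map_conjT, Matrix.transpose_pow]

lemma left_eig_pow {n : ℕ} (A : Matrix (Fin n) (Fin n) ℝ) (l : ℂ) (v : Fin n → ℂ)
    (heig : Matrix.vecMul (star v) (A.map (algebraMap ℝ ℂ)) = l • star v) (k : ℕ) :
    Matrix.vecMul (star v) ((A.map (algebraMap ℝ ℂ)) ^ k) = l ^ k • star v := by
  induction k with
  | zero => simp
  | succ m ih =>
    rw [pow_succ, ← Matrix.vecMul_vecMul, ih, Matrix.smul_vecMul, heig,
      smul_smul, ← pow_succ]

lemma normSq_conj_pow_mul (l x : ℂ) (k : ℕ) :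
    Complex.normSq (starRingEnd ℂ (l ^ k) * x) =
      ‖l‖ ^ (2 * k) * Complex.normSq x := by
  rw [_root_.map_mul, Complex.normSq_conj, _root_.map_pow, ← Complex.sq_norm l, ← pow_mul]

lemma psd_exists_mul_self {n : ℕ} (P : Matrix (Fin n) (Fin n) ℝ) (h : P.PosSemidef) :
    ∃ C : Matrix (Fin n) (Fin n) ℝ, P = Cᴴ * C := by
  open scoped MatrixOrder Matrix.Norms.L2Operator in
  obtain ⟨B, hB⟩ := CStarAlgebra.nonneg_iff_eq_star_mul_self.mp h.nonneg
  exact ⟨B, by simpa [star_eq_conjTranspose] using hB⟩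

/-- If `v ≠ 0` is a left eigenvector of (the complexification of) `A` with eigenvalue `λ`
and `P₀` is symmetric with `P₀ ⪰ q·I`, `q > 0`, then for every `k`,
`Tr(A^k P₀ (Aᵀ)^k) ≥ q |λ|^{2k}`. -/
theorem trace_conjugated_covariance_lower_bound
    {n : ℕ} (A P₀ : Matrix (Fin n) (Fin n) ℝ) (q : ℝ) (hq : 0 < q)
    (hP₀sym : P₀.IsSymm)
    (hP₀ : (P₀ - q • (1 : Matrix (Fin n) (Fin n) ℝ)).PosSemidef)
    (l : ℂ) (v : Fin n → ℂ) (hv : v ≠ 0)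
    (heig : Matrix.vecMul (star v) (A.map (algebraMap ℝ ℂ)) = l • star v) :
    ∀ k : ℕ, q * ‖l‖ ^ (2 * k) ≤ (A ^ k * P₀ * (Aᵀ) ^ k).trace := by
  intro k
  have hq1 : (q • (1 : Matrix (Fin n) (Fin n) ℝ)).PosSemidef := by
    rw [Matrix.smul_one_eq_diagonal]
    exact Matrix.posSemidef_diagonal_iff.mpr fun i => le_of_lt hq
  have hP0psd : P₀.PosSemidef := by
    have := hP₀.add hq1
    simpa using this
  obtain ⟨C, hC⟩ := psd_exists_mul_self _ hP0psd
  obtain ⟨E, hE⟩ := psd_exists_mul_self _ hP₀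
  rw [Matrix.conjTranspose_eq_transpose_of_trivial] at hC hE
  set D : Matrix (Fin n) (Fin n) ℝ := C * (Aᵀ) ^ k with hD
  -- trace formula
  have hTrace : (A ^ k * P₀ * (Aᵀ) ^ k).trace = ∑ j, ∑ i, (D i j) * (D i j) := by
    have hmat : A ^ k * P₀ * (Aᵀ) ^ k = Dᵀ * D := by
      rw [hC, hD, Matrix.transpose_mul, Matrix.transpose_pow, Matrix.transpose_transpose]
      noncomm_ring
    rw [hmat]
    simp [Matrix.trace, Matrix.mul_apply, Matrix.diag]
  have h2 := left_eig_pow A l v heig k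
  have h3 : ((A.map (algebraMap ℝ ℂ)) ^ k)ᴴ *ᵥ v = (starRingEnd ℂ (l ^ k)) • v := by
    have := congrArg star h2
    rw [Matrix.star_vecMul, star_star] at this
    rw [this, star_smul, star_star]
    rfl
  have h1 : D.map (algebraMap ℝ ℂ) =
      C.map (algebraMap ℝ ℂ) * ((A.map (algebraMap ℝ ℂ)) ^ k)ᴴ := by
    rw [hD, map_mul'', mapT_pow]
  have h4 : D.map (algebraMap ℝ ℂ) *ᵥ v =
      (starRingEnd ℂ (l ^ k)) • (C.map (algebraMap ℝ ℂ) *ᵥ v) := by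
    rw [h1, ← Matrix.mulVec_mulVec, h3, Matrix.mulVec_smul]
  set N : ℝ := ∑ i, Complex.normSq (v i) with hN
  set S : ℝ := ∑ i, Complex.normSq ((C.map (algebraMap ℝ ℂ) *ᵥ v) i) with hS
  have h5 : ∑ i, Complex.normSq ((D.map (algebraMap ℝ ℂ) *ᵥ v) i)
      = ‖l‖ ^ (2 * k) * S := by
    rw [h4, hS, Finset.mul_sum]
    exact Finset.sum_congr rfl fun i _ => normSq_conj_pow_mul l _ k
  have h6 : (C.map (algebraMap ℝ ℂ))ᴴ * C.map (algebraMap ℝ ℂ)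
      = P₀.map (algebraMap ℝ ℂ) := by
    rw [map_conjT, ← map_mul'', ← hC]
  have h6E : (E.map (algebraMap ℝ ℂ))ᴴ * E.map (algebraMap ℝ ℂ)
      = (P₀ - q • 1).map (algebraMap ℝ ℂ) := by
    rw [map_conjT, ← map_mul'', ← hE]
  have hquad : ∀ (X : Matrix (Fin n) (Fin n) ℂ),
      star (X *ᵥ v) ⬝ᵥ (X *ᵥ v) = (star v ᵥ* (Xᴴ * X)) ⬝ᵥ v := by
    intro X
    rw [Matrix.star_mulVec, Matrix.dotProduct_mulVec, Matrix.vecMul_vecMul]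
  have hPmap : P₀.map (algebraMap ℝ ℂ)
      = (E.map (algebraMap ℝ ℂ))ᴴ * E.map (algebraMap ℝ ℂ)
        + (q : ℂ) • (1 : Matrix (Fin n) (Fin n) ℂ) := by
    rw [h6E]
    have hsplit : P₀ = (P₀ - q • 1) + q • 1 := (sub_add_cancel _ _).symm
    nth_rewrite 1 [hsplit]
    rw [Matrix.map_add _ (map_add (algebraMap ℝ ℂ))]
    congr 1
    ext i j
    by_cases h : i = j <;> simp [Matrix.map_apply, Matrix.one_apply, h]
  have hqform : ∀ w : Fin n → ℂ, (star w ᵥ* ((q : ℂ) • (1 : Matrix (Fin n) (Fin n) ℂ))) ⬝ᵥ w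
      = (q : ℂ) * (star w ⬝ᵥ w) := by
    intro w
    rw [Matrix.smul_one_eq_diagonal]
    simp only [dotProduct, Matrix.vecMul_diagonal, Finset.mul_sum]
    exact Finset.sum_congr rfl fun i _ => by ring
  have h8 : S = (∑ i, Complex.normSq ((E.map (algebraMap ℝ ℂ) *ᵥ v) i)) + q * N := by
    have key : ((S : ℝ) : ℂ)
        = ((∑ i, Complex.normSq ((E.map (algebraMap ℝ ℂ) *ᵥ v) i) : ℝ) : ℂ)
          + (q : ℂ) * ((N : ℝ) : ℂ) := by
      rw [← sdp_aux, ← sdp_aux, ← sdp_aux, hquad, hquad, h6, hPmap]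
      rw [Matrix.vecMul_add, add_dotProduct]
      congr 1
      exact hqform v
    exact_mod_cast key
  have hNpos : 0 < N := by
    obtain ⟨i, hi⟩ := Function.ne_iff.mp hv
    apply Finset.sum_pos' (fun j _ => Complex.normSq_nonneg _)
    exact ⟨i, Finset.mem_univ i, Complex.normSq_pos.mpr hi⟩
  have hDsum : (∑ i, ∑ j, Complex.normSq ((D.map (algebraMap ℝ ℂ)) i j))
      = (A ^ k * P₀ * (Aᵀ) ^ k).trace := by
    rw [hTrace, Finset.sum_comm]
    apply Finset.sum_congr rfl; intro j _
    apply Finset.sum_congr rfl; intro i _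
    exact Complex.normSq_ofReal _
  have main : ‖l‖ ^ (2 * k) * S ≤ (A ^ k * P₀ * (Aᵀ) ^ k).trace * N := by
    rw [← h5, ← hDsum]
    exact cs_aux (D.map (algebraMap ℝ ℂ)) v
  have hSq : q * N ≤ S := by
    rw [h8]
    have : 0 ≤ ∑ i, Complex.normSq ((E.map (algebraMap ℝ ℂ) *ᵥ v) i) :=
      Finset.sum_nonneg fun i _ => Complex.normSq_nonneg _
    linarith
  have final : (q * ‖l‖ ^ (2 * k)) * N ≤ (A ^ k * P₀ * (Aᵀ) ^ k).trace * N := by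
    calc (q * ‖l‖ ^ (2 * k)) * N
        = ‖l‖ ^ (2 * k) * (q * N) := by ring
      _ ≤ ‖l‖ ^ (2 * k) * S :=
          mul_le_mul_of_nonneg_left hSq (pow_nonneg (norm_nonneg _) _)
      _ ≤ (A ^ k * P₀ * (Aᵀ) ^ k).trace * N := main
  exact le_of_mul_le_mul_right final hNpos
end
end
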